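/- If P is symmetric and y ≥ 0, then ∫_{(−∞,0]} φ(y − x) dP(x) ≤ ∫_{[0,∞)} φ(y − x) dP(x). Consequently, for symmetric P and y > 0 (and by symmetry for y < 0), the local false sign rate min(P(X ≤ 0 | Y = y), P(X ≥ 0 | Y = y)) equals the posterior probability P(XY ≤ 0 | Y = y). -/
import Mathlib


open MeasureTheory Real

/-- The standard normal density. -/
noncomputable def phi (t : ℝ) : ℝ := (Real.sqrt (2 * Real.pi))⁻¹ * Real.exp (-(t ^ 2) / 2)

/-- The marginal density of `Y` in the signal-plus-noise model. -/
noncomputable def marginal (P : Measure ℝ) (y : ℝ) : ℝ := ∫ x, phi (y - x) ∂P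

lemma phi_nonneg (t : ℝ) : 0 ≤ phi t := by unfold phi; positivity

lemma phi_neg (t : ℝ) : phi (-t) = phi t := by simp [phi, neg_sq]

lemma phi_cont : Continuous phi := by unfold phi; fun_prop

lemma phi_le (t : ℝ) : phi t ≤ (Real.sqrt (2 * Real.pi))⁻¹ := by
  unfold phi
  have h1 : Real.exp (-(t ^ 2) / 2) ≤ 1 := by
    rw [Real.exp_le_one_iff]; nlinarith [sq_nonneg t]
  have h2 : (0:ℝ) ≤ (Real.sqrt (2 * Real.pi))⁻¹ := by positivity
  nlinarith

lemma integrable_phi_comp (μ : Measure ℝ) [IsFiniteMeasure μ] {g : ℝ → ℝ}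
    (hg : Continuous g) : Integrable (fun x => phi (g x)) μ := by
  apply Integrable.mono' (integrable_const ((Real.sqrt (2 * Real.pi))⁻¹))
  · exact (phi_cont.comp hg).aestronglyMeasurable
  · filter_upwards with x
    rw [Real.norm_eq_abs, abs_of_nonneg (phi_nonneg _)]
    exact phi_le _

lemma swap_int (P : Measure ℝ) (hsymm : Measure.map (fun x : ℝ => -x) P = P)
    (f : ℝ → ℝ) (hf : Continuous f) :
    ∫ x in Set.Iic (0:ℝ), f x ∂P = ∫ x in Set.Ici (0:ℝ), f (-x) ∂P := by
  conv_lhs => rw [← hsymm]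
  rw [Measure.restrict_map measurable_neg measurableSet_Iic]
  have hpre : (fun x : ℝ => -x) ⁻¹' Set.Iic 0 = Set.Ici 0 := by ext x; simp
  rw [hpre, integral_map measurable_neg.aemeasurable hf.aestronglyMeasurable]

lemma phi_mono_pt {x y : ℝ} (hy : 0 ≤ y) (hx : 0 ≤ x) : phi (y + x) ≤ phi (y - x) := by
  unfold phi
  have h : Real.exp (-((y + x) ^ 2) / 2) ≤ Real.exp (-((y - x) ^ 2) / 2) := by
    apply Real.exp_le_exp.mpr; nlinarith
  have h2 : (0:ℝ) ≤ (Real.sqrt (2 * Real.pi))⁻¹ := by positivity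
  nlinarith

/-- for symmetric `P` and `y ≥ 0`,
`∫_{(-∞,0]} φ(y - x) dP(x) ≤ ∫_{[0,∞)} φ(y - x) dP(x)`; consequently for `y ≠ 0` the local
false sign rate `min(P(X ≤ 0 | Y = y), P(X ≥ 0 | Y = y))` equals the posterior probability
`P(XY ≤ 0 | Y = y)` (stated at the level of the unnormalized integrals). -/
theorem stmt11 (P : Measure ℝ) [IsProbabilityMeasure P]
    (hsymm : Measure.map (fun x : ℝ => -x) P = P) :
    (∀ y : ℝ, 0 ≤ y →
      (∫ x in Set.Iic (0 : ℝ), phi (y - x) ∂P) ≤ ∫ x in Set.Ici (0 : ℝ), phi (y - x) ∂P) ∧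
    (∀ y : ℝ, y ≠ 0 →
      min (∫ x in Set.Iic (0 : ℝ), phi (y - x) ∂P) (∫ x in Set.Ici (0 : ℝ), phi (y - x) ∂P) =
        ∫ x in {x : ℝ | x * y ≤ 0}, phi (y - x) ∂P) := by
  have h1 : ∀ y : ℝ, 0 ≤ y →
      (∫ x in Set.Iic (0 : ℝ), phi (y - x) ∂P) ≤ ∫ x in Set.Ici (0 : ℝ), phi (y - x) ∂P := by
    intro y hy
    rw [swap_int P hsymm (fun x => phi (y - x)) (phi_cont.comp (by fun_prop))]
    apply setIntegral_mono_on
    · exact integrable_phi_comp _ (by fun_prop)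
    · exact integrable_phi_comp _ (by fun_prop)
    · exact measurableSet_Ici
    · intro x hx
      have : y - -x = y + x := by ring
      rw [this]
      exact phi_mono_pt hy (Set.mem_Ici.mp hx)
  refine ⟨h1, ?_⟩
  intro y hy
  rcases lt_or_gt_of_ne hy with hneg | hpos
  · -- y < 0 : the set is Ici 0, and Ici integral is the min
    have hset : {x : ℝ | x * y ≤ 0} = Set.Ici 0 := by
      ext x
      simp only [Set.mem_setOf_eq, Set.mem_Ici]
      constructor
      · intro h; nlinarith
      · intro h; nlinarith
    rw [hset]
    apply min_eq_right
    -- show ∫_{Ici} φ(y-x) ≤ ∫_{Iic} φ(y-x)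
    have hz : 0 ≤ -y := by linarith
    have e1 : (∫ x in Set.Iic (0:ℝ), phi (-y - x) ∂P) = ∫ x in Set.Ici (0:ℝ), phi (y - x) ∂P := by
      rw [swap_int P hsymm (fun x => phi (-y - x)) (phi_cont.comp (by fun_prop))]
      apply setIntegral_congr_fun measurableSet_Ici
      intro x _
      show phi (-y - -x) = phi (y - x)
      have : -y - -x = -(y - x) := by ring
      rw [this, phi_neg]
    have e2 : (∫ x in Set.Ici (0:ℝ), phi (-y - x) ∂P) = ∫ x in Set.Iic (0:ℝ), phi (y - x) ∂P := by
      rw [swap_int P hsymm (fun x => phi (y - x)) (phi_cont.comp (by fun_prop))]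
      apply setIntegral_congr_fun measurableSet_Ici
      intro x _
      show phi (-y - x) = phi (y - -x)
      have : y - -x = -(-y - x) := by ring
      rw [this, phi_neg]
    calc (∫ x in Set.Ici (0:ℝ), phi (y - x) ∂P) = ∫ x in Set.Iic (0:ℝ), phi (-y - x) ∂P := e1.symm
      _ ≤ ∫ x in Set.Ici (0:ℝ), phi (-y - x) ∂P := h1 (-y) hz
      _ = ∫ x in Set.Iic (0:ℝ), phi (y - x) ∂P := e2
  · -- y > 0 : the set is Iic 0
    have hset : {x : ℝ | x * y ≤ 0} = Set.Iic 0 := by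
      ext x
      simp only [Set.mem_setOf_eq, Set.mem_Iic]
      constructor
      · intro h; nlinarith
      · intro h; nlinarith
    rw [hset]
    exact min_eq_left (h1 y hpos.le)
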